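/- Let A be a unital *-algebra with faithful tracial state tr and commuting trace-annihilating derivations ∂₁, ∂₂, and let p be a projection in A. If p satisfies the self-duality equation (∂₁ + i∂₂)(p)·p = 0, then equality S[p] = c₁(p) holds, where S[p] = (1/4π) tr((∂₁p)² + (∂₂p)²) and c₁(p) = (1/2πi) tr(p(∂₁p ∂₂p − ∂₂p ∂₁p)). -/

import Mathlib

/-- If a projection `p` satisfies the self-duality equation `(∂₁ + i∂₂)(p)·p = 0`,
then `S[p] = c₁(p)`. -/
theorem selfdual_action_eq_charge {A : Type*} [Ring A] [Algebra ℂ A] [StarRing A]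
    (tr : A →ₗ[ℂ] ℂ)
    (htr : ∀ a b : A, tr (a * b) = tr (b * a))
    (hpos : ∀ a : A, 0 ≤ (tr (star a * a)).re ∧ (tr (star a * a)).im = 0)
    (hfaith : ∀ a : A, tr (star a * a) = 0 → a = 0)
    (d1 d2 : A →ₗ[ℂ] A)
    (hd1 : ∀ a b : A, d1 (a * b) = d1 a * b + a * d1 b)
    (hd2 : ∀ a b : A, d2 (a * b) = d2 a * b + a * d2 b)
    (hcomm : ∀ a : A, d1 (d2 a) = d2 (d1 a))
    (hstar1 : ∀ a : A, d1 (star a) = star (d1 a))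
    (hstar2 : ∀ a : A, d2 (star a) = star (d2 a))
    (htr1 : ∀ a : A, tr (d1 a) = 0) (htr2 : ∀ a : A, tr (d2 a) = 0)
    (p : A) (hp : p * p = p) (hps : star p = p)
    (hsd : (d1 p + Complex.I • d2 p) * p = 0) :
    (1 / (4 * (Real.pi : ℂ))) * tr (d1 p * d1 p + d2 p * d2 p) =
      (1 / (2 * (Real.pi : ℂ) * Complex.I)) * tr (p * (d1 p * d2 p - d2 p * d1 p)) := by
  set a := d1 p with ha
  set b := d2 p with hb
  -- a cyclic rewriting helper for the trace
  have cyc3 : ∀ x y z : A, tr (x * (y * z)) = tr (z * (x * y)) := fun x y z => by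
    rw [← mul_assoc, htr]
  -- self-duality: a*p = -(I • (b*p)) and b*p = I • (a*p)
  have hA : a * p = -(Complex.I • (b * p)) := by
    have h := hsd
    rw [add_mul, smul_mul_assoc] at h
    linear_combination (norm := module) h
  have hA' : b * p = Complex.I • (a * p) := by
    rw [hA, smul_neg, smul_smul, Complex.I_mul_I, neg_smul, neg_neg, one_smul]
  -- the element v = star(algebraMap I): central, with v*v = -1
  set u : A := algebraMap ℂ A Complex.I with hu
  set v : A := star u with hv
  have hvc : ∀ x : A, v * x = x * v := by
    intro x
    calc v * x = star (star x * u) := by rw [star_mul, star_star]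
      _ = star (u * star x) := by rw [(Algebra.commutes Complex.I (star x)).symm]
      _ = x * v := by rw [star_mul, star_star]
  have hvv : v * v = -1 := by
    rw [hv, ← star_mul, hu, ← map_mul, Complex.I_mul_I, map_neg, map_one, star_neg, star_one]
  -- star of self-duality: p*a = -(v*(p*b)) and p*b = v*(p*a)
  have hsa : star a = a := by rw [ha, ← hstar1, hps]
  have hsb : star b = b := by rw [hb, ← hstar2, hps]
  have hB : p * a = -(v * (p * b)) := by
    have h := congrArg star hsd
    rw [star_mul, star_add, hps, hsa, star_zero] at h
    have hsIb : star (Complex.I • b) = v * b := by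
      rw [Algebra.smul_def, ← hu, star_mul, hsb, hvc]
    rw [hsIb, mul_add] at h
    have h2 : p * a + v * (p * b) = 0 := by
      rw [← h]
      congr 1
      calc v * (p * b) = (v * p) * b := by rw [mul_assoc]
        _ = (p * v) * b := by rw [hvc]
        _ = p * (v * b) := by rw [mul_assoc]
    linear_combination (norm := noncomm_ring) h2
  have hB' : p * b = v * (p * a) := by
    rw [hB, ← mul_neg, ← mul_assoc, hvv]
    noncomm_ring
  -- Leibniz on p*p = p
  have h1 : a = a * p + p * a := by
    have := hd1 p p; rw [hp] at this; rw [ha]; exact this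
  have h2 : b = b * p + p * b := by
    have := hd2 p p; rw [hp] at this; rw [hb]; exact this
  -- halving identities: tr(x*x) = 2 tr(p*(x*x)) for x = a, b
  have half : ∀ x : A, x = x * p + p * x → tr (x * x) = 2 * tr (p * (x * x)) := by
    intro x hx
    have e : tr (x * x) = tr ((x * p) * x) + tr ((p * x) * x) := by
      rw [← map_add, ← add_mul, ← hx]
    have e1 : tr ((x * p) * x) = tr (p * (x * x)) := by
      rw [htr, cyc3]
    have e2 : tr ((p * x) * x) = tr (p * (x * x)) := by rw [mul_assoc]
    rw [e, e1, e2]; ring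
  have Ha2 := half a h1
  have Hb2 := half b h2
  set X := tr (p * (a * b)) with hX
  set Y := tr (p * (b * a)) with hY
  -- compute tr(a*a)
  have ea : tr (a * a) = -(Complex.I * X) + tr (p * (a * a)) := by
    have e : tr (a * a) = tr (a * (a * p)) + tr (a * (p * a)) := by
      rw [← map_add, ← mul_add, ← h1]
    rw [e]
    congr 1
    · rw [hA, mul_neg, mul_smul_comm, map_neg, map_smul, cyc3]
      simp [smul_eq_mul, hX]
    · have s2 : (v * (p * b)) * a = -(p * (a * a)) := by
        rw [hB', show v * (v * (p * a)) * a = ((v * v) * (p * a)) * a from by noncomm_ring,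
          hvv]
        noncomm_ring
      rw [hB, mul_neg, map_neg, htr, s2, map_neg, neg_neg]
  -- compute tr(b*b)
  have eb : tr (b * b) = Complex.I * Y + tr (p * (b * b)) := by
    have e : tr (b * b) = tr (b * (b * p)) + tr (b * (p * b)) := by
      rw [← map_add, ← mul_add, ← h2]
    rw [e]
    congr 1
    · rw [hA', mul_smul_comm, map_smul, cyc3]
      simp [smul_eq_mul, hY]
    · have s2 : (v * (p * a)) * b = p * (b * b) := by
        rw [hB, show v * -(v * (p * b)) * b = -(((v * v) * (p * b)) * b) from by noncomm_ring,
          hvv]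
        noncomm_ring
      rw [hB', htr, s2]
  -- conclude the trace values
  have va : tr (a * a) = -(2 * Complex.I) * X := by
    have : 2 * tr (p * (a * a)) = -(Complex.I * X) + tr (p * (a * a)) := by
      rw [← Ha2, ea]
    have h' : tr (p * (a * a)) = -(Complex.I * X) := by linear_combination this
    rw [Ha2, h']; ring
  have vb : tr (b * b) = (2 * Complex.I) * Y := by
    have : 2 * tr (p * (b * b)) = Complex.I * Y + tr (p * (b * b)) := by
      rw [← Hb2, eb]
    have h' : tr (p * (b * b)) = Complex.I * Y := by linear_combination this
    rw [Hb2, h']; ring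
  have key : tr (a * a + b * b) = -(2 * Complex.I) * tr (p * (a * b - b * a)) := by
    rw [map_add, va, vb, show p * (a * b - b * a) = p * (a * b) - p * (b * a) from
      mul_sub p _ _, map_sub, ← hX, ← hY]
    ring
  rw [key]
  have hπ : (Real.pi : ℂ) ≠ 0 := by exact_mod_cast Real.pi_ne_zero
  field_simp
  ring_nf
  rw [Complex.I_sq]
  ring
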